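/- Let G be a finite simple graph with edge ideal I(G) ⊆ R = k[x_1,...,x_n]. Then reg(R/I(G)) ≤ α'(G), where α'(G) is the matching number of G. Equivalently, reg(I(G)) ≤ α'(G) + 1. -/

import Mathlib

open Finset
open scoped Classical

noncomputable section

/-- A simple hypergraph: all edges have at least two vertices and no edge contains another. -/
structure SimpleHypergraph (V : Type*) where
  edges : Finset (Finset V)
  card_ge : ∀ e ∈ edges, 2 ≤ e.card
  antichain : ∀ e ∈ edges, ∀ f ∈ edges, e ⊆ f → e = f

variable {V : Type*} [DecidableEq V]

/-- A chain `(E₀, x₁, E₁, …, xₙ, Eₙ)` in a hypergraph, recorded as the list of its edges;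
the vertex conditions amount to `xₖ ∈ Eₖ₋₁ ∩ Eₖ`. -/
def IsHChain (H : SimpleHypergraph V) (l : List (Finset V)) : Prop :=
  l ≠ [] ∧ l.Nodup ∧ (∀ e ∈ l, e ∈ H.edges) ∧
  ∃ xs : List V, xs.Nodup ∧ xs.length + 1 = l.length ∧
    ∀ i, (h : i < xs.length) → xs.get ⟨i, h⟩ ∈ l.getD i ∅ ∩ l.getD (i+1) ∅

/-- A proper chain: `|Eᵢ ∩ Eᵢ₊₁| = |Eᵢ₊₁| - 1` for all `i`. -/
def IsProperChain (H : SimpleHypergraph V) (l : List (Finset V)) : Prop :=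
  IsHChain H l ∧ ∀ i, i + 1 < l.length →
    (l.getD i ∅ ∩ l.getD (i+1) ∅).card + 1 = (l.getD (i+1) ∅).card

/-- A proper irredundant chain: no proper subsequence with the same endpoints is a proper
chain. -/
def IsPIChain (H : SimpleHypergraph V) (l : List (Finset V)) : Prop :=
  IsProperChain H l ∧ ∀ l' : List (Finset V), l'.Sublist l → l' ≠ l →
    l'.head? = l.head? → l'.getLast? = l.getLast? → ¬ IsProperChain H l'

/-- The distance between two edges: minimal length of a proper irredundant chain
from `E` to `F` (`∞` if there is none). -/
def edgeDist (H : SimpleHypergraph V) (E F : Finset V) : ℕ∞ :=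
  sInf ((fun l : List (Finset V) => ((l.length - 1 : ℕ) : ℕ∞)) ''
    {l | IsPIChain H l ∧ l.head? = some E ∧ l.getLast? = some F})

/-- A `d`-uniform properly-connected hypergraph. -/
def UniformPC (H : SimpleHypergraph V) (d : ℕ) : Prop :=
  (∀ e ∈ H.edges, e.card = d) ∧
  ∀ E ∈ H.edges, ∀ F ∈ H.edges, (E ∩ F).Nonempty →
    edgeDist H E F = ((d - (E ∩ F).card : ℕ) : ℕ∞)

/-- The sub-hypergraph consisting of the edges satisfying `P`. -/
def SimpleHypergraph.restrict (H : SimpleHypergraph V) (P : Finset V → Prop) :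
    SimpleHypergraph V where
  edges := H.edges.filter P
  card_ge := fun e he => H.card_ge e (Finset.mem_filter.mp he).1
  antichain := fun e he f hf hef =>
    H.antichain e (Finset.mem_filter.mp he).1 f (Finset.mem_filter.mp hf).1 hef

/-- The vertex neighbor set `N(E)` of an edge: union of `F \ E` over edges at distance 1. -/
def nbrSet (H : SimpleHypergraph V) (E : Finset V) : Finset V :=
  (H.edges.filter fun F => edgeDist H E F = 1).sup fun F => F \ E

variable (k : Type*) [Field k]

/-- The squarefree monomial attached to an edge. -/
def edgeMonomial (E : Finset V) : MvPolynomial V k := ∏ x ∈ E, MvPolynomial.X x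

/-- The edge ideal of a hypergraph. -/
def edgeIdeal (H : SimpleHypergraph V) : Ideal (MvPolynomial V k) :=
  Ideal.span ((fun E => edgeMonomial k E) '' ↑H.edges)

/-- The exponent vector of the squarefree monomial attached to an edge. -/
def mexp (E : Finset V) : V →₀ ℕ := ∑ x ∈ E, Finsupp.single x 1

/-- The minimal monomials (w.r.t. divisibility) among a finite set of monomials;
these are the minimal generators of the monomial ideal they generate. -/
def minMon (A : Finset (V →₀ ℕ)) : Finset (V →₀ ℕ) :=
  A.filter fun m => ∀ m' ∈ A, m' ≤ m → m' = m

/-- Minimal generators of `J ∩ K`, where `J`, `K` are the monomial ideals with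
(minimal) monomial generators `A`, `B`: minimal elements among the pairwise lcm's. -/
def interMin (A B : Finset (V →₀ ℕ)) : Finset (V →₀ ℕ) :=
  minMon ((A ×ˢ B).image fun p => p.1 ⊔ p.2)

/-- Eliahou–Kervaire splitting: the monomial ideal generated by `A ∪ B` is split as
the sum of the ideals generated by `A` and by `B`. -/
def IsSplitting (A B : Finset (V →₀ ℕ)) : Prop :=
  A.Nonempty ∧ B.Nonempty ∧ Disjoint A B ∧
  (∀ m ∈ A ∪ B, ∀ m' ∈ A ∪ B, m' ≤ m → m' = m) ∧
  ∃ φ ψ : (V →₀ ℕ) → (V →₀ ℕ),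
    (∀ w ∈ interMin A B, φ w ∈ A ∧ ψ w ∈ B ∧ w = φ w ⊔ ψ w) ∧
    ∀ S ⊆ interMin A B, S.Nonempty → S.sup φ < S.sup id ∧ S.sup ψ < S.sup id

/-- A splitting edge of a hypergraph: `I(H) = (x^E) + I(H \ E)` is a splitting. -/
def IsSplittingEdge (H : SimpleHypergraph V) (E : Finset V) : Prop :=
  E ∈ H.edges ∧ IsSplitting {mexp E} ((H.edges.erase E).image mexp)

variable [LinearOrder V]

/-- Total degree of a monomial. -/
def mdeg (m : V →₀ ℕ) : ℕ := m.sum fun _ e => e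

/-- Basis of the degree-`j` part of the `i`-th term of the Taylor complex of the monomial
ideal generated by `G`: `i`-element subsets of `G` whose lcm has degree `j`. -/
def TaylorIndex (G : Finset (V →₀ ℕ)) (i j : ℕ) : Finset (Finset (V →₀ ℕ)) :=
  G.powerset.filter fun S => S.card = i ∧ mdeg (S.sup id) = j

/-- Matrix of the Taylor-complex differential `T_{i+1} → T_i` reduced mod the maximal
ideal, in homological degree-`j` graded part. -/
def taylorMatrix (G : Finset (V →₀ ℕ)) (i j : ℕ) :
    Matrix (TaylorIndex G i j) (TaylorIndex G (i+1) j) k :=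
  fun S' S =>
    if (S' : Finset (V →₀ ℕ)) ⊆ (S : Finset (V →₀ ℕ)) ∧
        (S' : Finset (V →₀ ℕ)).sup id = (S : Finset (V →₀ ℕ)).sup id then
      ∑ m ∈ (S : Finset (V →₀ ℕ)) \ (S' : Finset (V →₀ ℕ)),
        (-1 : k) ^ ((S' : Finset (V →₀ ℕ)).filter fun a => toLex a < toLex m).card
    else 0

/-- The Taylor-complex differential reduced mod the maximal ideal. -/
def taylorBoundary (G : Finset (V →₀ ℕ)) (i j : ℕ) :
    ((TaylorIndex G (i+1) j) → k) →ₗ[k] ((TaylorIndex G i j) → k) :=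
  Matrix.mulVecLin (taylorMatrix k G i j)

/-- The graded Betti number `β_{i,j}` of the monomial ideal generated by `G`, computed as
the dimension of the degree-`j` part of the `i`-th homology of the Taylor complex tensored
with the residue field. -/
def monomialBetti (G : Finset (V →₀ ℕ)) (i j : ℕ) : ℕ :=
  Module.finrank k (LinearMap.ker (taylorBoundary k G i j)) -
  Module.finrank k (LinearMap.range (taylorBoundary k G (i+1) j))

/-- Castelnuovo–Mumford regularity of the monomial ideal generated by `G`. -/
def monReg (G : Finset (V →₀ ℕ)) : ℕ :=
  sSup {r | ∃ i j, monomialBetti k G i j ≠ 0 ∧ r + i = j}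

/-- Projective dimension of the monomial ideal generated by `G`. -/
def monPdim (G : Finset (V →₀ ℕ)) : ℕ :=
  sSup {i | ∃ j, monomialBetti k G i j ≠ 0}

/-- Graded Betti numbers of the edge ideal of a hypergraph. -/
def edgeBetti (H : SimpleHypergraph V) (i j : ℕ) : ℕ :=
  monomialBetti k (H.edges.image mexp) i j

/-- Regularity of the edge ideal of a hypergraph. -/
def edgeReg (H : SimpleHypergraph V) : ℕ :=
  monReg k (H.edges.image mexp)

lemma mexp_apply (E : Finset V) (x : V) : mexp E x = if x ∈ E then 1 else 0 := by
  classical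
  simp [mexp, Finsupp.finset_sum_apply, Finsupp.single_apply]

lemma mexp_injective : Function.Injective (mexp (V := V)) := by
  intro E F h
  ext x
  have h' : mexp E x = mexp F x := by rw [h]
  rw [mexp_apply, mexp_apply] at h'
  split_ifs at h' <;> simp_all

lemma mexp_union (E F : Finset V) : mexp (E ∪ F) = mexp E ⊔ mexp F := by
  ext x
  rw [Finsupp.sup_apply, mexp_apply, mexp_apply, mexp_apply]
  by_cases hE : x ∈ E <;> by_cases hF : x ∈ F <;> simp [hE, hF]

lemma mexp_bot : mexp (⊥ : Finset V) = ⊥ := by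
  rw [Finsupp.bot_eq_zero]
  simp [mexp]

lemma sup_mexp (M : Finset (Finset V)) : M.sup mexp = mexp (M.sup id) := by
  classical
  induction M using Finset.induction_on with
  | empty => exact mexp_bot.symm
  | insert _ _ hx ih =>
      rw [Finset.sup_insert, Finset.sup_insert, ih, id]
      rw [show ∀ e f : Finset V, e ⊔ f = e ∪ f from fun _ _ => rfl, mexp_union]

lemma mdeg_mexp (E : Finset V) : mdeg (mexp E) = E.card := by
  classical
  induction E using Finset.induction_on with
  | empty => simp [mdeg, mexp]
  | @insert x E hx ih =>
      rw [mexp, Finset.sum_insert hx, ← mexp]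
      rw [mdeg, Finsupp.sum_add_index' (fun _ => rfl) (fun _ _ _ => rfl)]
      rw [Finsupp.sum_single_index rfl, ← mdeg, ih, Finset.card_insert_of_notMem hx]
      omega

/-- Union of a set of 2-element sets is bounded by its size plus a matching size. -/
lemma exists_matching_bound : ∀ M : Finset (Finset V), (∀ e ∈ M, e.card = 2) →
    ∃ N ⊆ M, (∀ E ∈ N, ∀ F ∈ N, E ≠ F → Disjoint E F) ∧
      (M.sup id).card ≤ M.card + N.card := by
  classical
  intro M
  induction M using Finset.strongInduction with
  | _ M ih =>
    intro h2
    rcases M.eq_empty_or_nonempty with rfl | ⟨e, he⟩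
    · exact ⟨∅, by simp⟩
    · have he2 := h2 e he
      have hene : e.Nonempty := Finset.card_pos.mp (by omega)
      set T := M.filter (fun f => ¬ Disjoint f e) with hTdef
      have heT : e ∈ T := by
        refine Finset.mem_filter.mpr ⟨he, fun hd => ?_⟩
        rw [disjoint_self, Finset.bot_eq_empty] at hd
        simp [hd] at hene
      have hTM : T ⊆ M := Finset.filter_subset _ _
      have hss : M \ T ⊂ M := Finset.sdiff_ssubset hTM ⟨e, heT⟩
      obtain ⟨N', hN'M', hmatch', hcard'⟩ :=
        ih (M \ T) hss (fun f hf => h2 f (Finset.sdiff_subset hf))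
      have hdisj : ∀ f ∈ N', Disjoint f e := by
        intro f hf
        have hf' := hN'M' hf
        rw [Finset.mem_sdiff] at hf'
        by_contra hnd
        exact hf'.2 (Finset.mem_filter.mpr ⟨hf'.1, hnd⟩)
      have heN' : e ∉ N' := by
        intro h
        have := hN'M' h
        rw [Finset.mem_sdiff] at this
        exact this.2 heT
      refine ⟨insert e N', ?_, ?_, ?_⟩
      · intro f hf
        rcases Finset.mem_insert.mp hf with rfl | hf
        · exact he
        · exact Finset.sdiff_subset (hN'M' hf)
      · intro E hE F hF hne
        rcases Finset.mem_insert.mp hE with hEe | hE'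
        · rcases Finset.mem_insert.mp hF with hFe | hF'
          · exact absurd (hEe.trans hFe.symm) hne
          · subst hEe; exact (hdisj F hF').symm
        · rcases Finset.mem_insert.mp hF with hFe | hF'
          · subst hFe; exact hdisj E hE'
          · exact hmatch' E hE' F hF' hne
      · -- cardinality bound
        have hMsplit : (M \ T) ∪ T = M := Finset.sdiff_union_of_subset hTM
        have hsup : M.sup id = (M \ T).sup id ⊔ T.sup id := by
          conv_lhs => rw [← hMsplit]
          exact Finset.sup_union
        have hT1 : (T.sup id).card ≤ T.card + 1 := by
          have hsub : T.sup id ≤ e ∪ (T.erase e).sup (fun f => f \ e) := by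
            apply Finset.sup_le
            intro f hf
            by_cases hfe : f = e
            · subst hfe; exact Finset.le_iff_subset.mpr Finset.subset_union_left
            · refine Finset.le_iff_subset.mpr fun x hx => ?_
              by_cases hxe : x ∈ e
              · exact Finset.mem_union_left _ hxe
              · refine Finset.mem_union_right _ ?_
                exact Finset.le_sup (f := fun f => f \ e)
                  (Finset.mem_erase.mpr ⟨hfe, hf⟩) (Finset.mem_sdiff.mpr ⟨hx, hxe⟩)
          have hb : ((T.erase e).sup (fun f => f \ e)).card ≤ (T.erase e).card := by
            rw [Finset.sup_eq_biUnion]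
            refine le_trans Finset.card_biUnion_le ?_
            refine le_trans (Finset.sum_le_sum (g := fun _ => 1) ?_) (by simp)
            intro f hf
            rw [Finset.mem_erase] at hf
            have hfT := Finset.mem_filter.mp (hf.2)
            obtain ⟨x, hx⟩ := Finset.not_disjoint_iff_nonempty_inter.mp hfT.2
            have h1 : (f ∩ e).card + (f \ e).card = f.card :=
              Finset.card_inter_add_card_sdiff f e
            have h2' := h2 f hfT.1
            have h3 : 1 ≤ (f ∩ e).card := Finset.card_pos.mpr ⟨x, hx⟩
            show (f \ e).card ≤ 1
            omega
          calc (T.sup id).card ≤ (e ∪ (T.erase e).sup (fun f => f \ e)).card :=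
                Finset.card_le_card (Finset.le_iff_subset.mp hsub)
            _ ≤ e.card + ((T.erase e).sup (fun f => f \ e)).card :=
                Finset.card_union_le _ _
            _ ≤ 2 + (T.erase e).card := by omega
            _ ≤ T.card + 1 := by
                rw [Finset.card_erase_of_mem heT]
                have : 1 ≤ T.card := Finset.card_pos.mpr ⟨e, heT⟩
                omega
        have hMc : (M \ T).card + T.card = M.card := Finset.card_sdiff_add_card_eq_card hTM
        have hNc : (insert e N').card = N'.card + 1 := by
          rw [Finset.card_insert_of_notMem heN']
        have hsupc : (M.sup id).card ≤ ((M \ T).sup id).card + (T.sup id).card := by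
          rw [hsup]; exact Finset.card_union_le _ _
        omega

lemma taylor_nonempty (k : Type*) [Field k] {V : Type*} [LinearOrder V]
    (G : Finset (V →₀ ℕ)) (i j : ℕ) (h : monomialBetti k G i j ≠ 0) :
    ∃ S ⊆ G, S.card = i + 1 ∧ mdeg (S.sup id) = j := by
  by_contra hc
  push_neg at hc
  have hempty : TaylorIndex G (i+1) j = ∅ := by
    unfold TaylorIndex
    rw [Finset.filter_eq_empty_iff]
    rintro S hS ⟨hcard, hdeg⟩
    exact hc S (Finset.mem_powerset.mp hS) hcard hdeg
  haveI : IsEmpty (↑(TaylorIndex G (i+1) j)) := Finset.isEmpty_coe_sort.mpr hempty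
  haveI : Subsingleton ((↑(TaylorIndex G (i+1) j)) → k) := by infer_instance
  haveI : Subsingleton (LinearMap.ker (taylorBoundary k G i j)) :=
    ⟨fun x y => Subtype.ext (Subsingleton.elim _ _)⟩
  have hz : Module.finrank k (LinearMap.ker (taylorBoundary k G i j)) = 0 :=
    Module.finrank_zero_of_subsingleton
  apply h
  unfold monomialBetti
  omega

theorem reg_le_matching_number (k : Type*) [Field k] {V : Type*} [LinearOrder V]
    (H : SimpleHypergraph V) (hgraph : ∀ e ∈ H.edges, e.card = 2) (a : ℕ)
    (hmatch : ∀ M ⊆ H.edges, (∀ E ∈ M, ∀ F ∈ M, E ≠ F → Disjoint E F) → M.card ≤ a) :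
    edgeReg k H ≤ a + 1 := by
  classical
  unfold edgeReg monReg
  apply csSup_le'
  rintro r ⟨i, j, hb, hij⟩
  obtain ⟨S, hSG, hScard, hSdeg⟩ := taylor_nonempty k _ i j hb
  set M := H.edges.filter (fun e => mexp e ∈ S) with hMdef
  have hMsub : M ⊆ H.edges := Finset.filter_subset _ _
  have himg : M.image mexp = S := by
    apply Finset.Subset.antisymm
    · intro m hm
      obtain ⟨e, he, rfl⟩ := Finset.mem_image.mp hm
      exact (Finset.mem_filter.mp he).2
    · intro m hm
      obtain ⟨e, he, rfl⟩ := Finset.mem_image.mp (hSG hm)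
      exact Finset.mem_image_of_mem _ (Finset.mem_filter.mpr ⟨he, hm⟩)
  have hMcard : M.card = i + 1 := by
    rw [← himg, Finset.card_image_of_injective _ mexp_injective] at hScard
    exact hScard
  have hj : j = (M.sup id).card := by
    rw [← hSdeg, ← himg, Finset.sup_image]
    have : M.sup (id ∘ mexp) = M.sup mexp := rfl
    rw [this, sup_mexp, mdeg_mexp]
  obtain ⟨N, hNM, hNmatch, hbound⟩ :=
    exists_matching_bound M (fun e he => hgraph e (hMsub he))
  have hNa := hmatch N (hNM.trans hMsub) hNmatch
  omega
end
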